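/- For an integer n > 3, there exists an integer x with 0 < x < n - 2 such that φ(n + x) + 1 = n + x, where φ is Euler's totient function. (This is a reformulation of Bertrand's postulate.) -/

import Mathlib

open Real in
private theorem my_real_ineq {x : ℝ} (x_large : (512 : ℝ) ≤ x) :
    2 * x * x * (2 * x) ^ √(2 * x) * 4 ^ (2 * x / 3) ≤ 4 ^ x := by
  let f : ℝ → ℝ := fun x => log 2 + log x + log x + √(2 * x) * log (2 * x) - log 4 / 3 * x
  have hf' : ∀ x : ℝ, 0 < x → 0 < 2 * x * x * (2 * x) ^ √(2 * x) / 4 ^ (x / 3) := fun x h => by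
    positivity
  have hf : ∀ x : ℝ, 0 < x → f x = log (2 * x * x * (2 * x) ^ √(2 * x) / 4 ^ (x / 3)) := by
    intro x h5
    have h6 := mul_pos (zero_lt_two' ℝ) h5
    have h7 := rpow_pos_of_pos h6 (√(2 * x))
    rw [log_div (by positivity) (rpow_pos_of_pos four_pos _).ne',
      log_mul (by positivity) h7.ne', log_mul (by positivity) h5.ne',
      log_mul two_pos.ne' h5.ne', log_rpow h6, log_rpow zero_lt_four]
    simp only [f]
    ring
  have h5 : 0 < x := lt_of_lt_of_le (by norm_num1) x_large
  rw [← div_le_one (rpow_pos_of_pos four_pos x), ← div_div_eq_mul_div, ← rpow_sub four_pos]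
  have hexp : x - 2 * x / 3 = x / 3 := by ring
  rw [hexp, ← log_nonpos_iff (hf' x h5).le, ← hf x h5]
  have h : ConcaveOn ℝ (Set.Ioi 0.5) f := by
    apply ConcaveOn.sub
    · apply ConcaveOn.add
      · apply ConcaveOn.add
        · apply ConcaveOn.add
          · exact concaveOn_const _ (convex_Ioi _)
          · exact strictConcaveOn_log_Ioi.concaveOn.subset
              (Set.Ioi_subset_Ioi (by norm_num)) (convex_Ioi 0.5)
        · exact strictConcaveOn_log_Ioi.concaveOn.subset
            (Set.Ioi_subset_Ioi (by norm_num)) (convex_Ioi 0.5)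
      · convert ((strictConcaveOn_sqrt_mul_log_Ioi.concaveOn.comp_linearMap
          ((2 : ℝ) • LinearMap.id))) using 1
        · rfl
        · rfl
        ext x
        simp only [Set.mem_Ioi, Set.mem_preimage, LinearMap.smul_apply,
          LinearMap.id_coe, id_eq, smul_eq_mul]
        rw [← mul_lt_mul_iff_right₀ (two_pos)]
        norm_num1
        rfl
        rfl
    · apply ConvexOn.smul
      · refine div_nonneg (log_nonneg (by norm_num1)) (by norm_num1)
      · exact convexOn_id (convex_Ioi (0.5 : ℝ))
  suffices ∃ x1 x2, 0.5 < x1 ∧ x1 < x2 ∧ x2 ≤ x ∧ 0 ≤ f x1 ∧ f x2 ≤ 0 by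
    obtain ⟨x1, x2, h1, h2, h0, h3, h4⟩ := this
    exact (h.right_le_of_le_left'' h1 ((h1.trans h2).trans_le h0) h2 h0 (h4.trans h3)).trans h4
  refine ⟨18, 512, by norm_num1, by norm_num1, x_large, ?_, ?_⟩
  · have : √(2 * 18 : ℝ) = 6 := (sqrt_eq_iff_mul_self_eq_of_pos (by norm_num1)).mpr (by norm_num1)
    rw [hf _ (by norm_num1), log_nonneg_iff (by positivity), this, one_le_div (by norm_num1)]
    norm_num1
  · have h32 : √(2 * 512 : ℝ) = 32 :=
      (sqrt_eq_iff_mul_self_eq_of_pos (by norm_num1)).mpr (by norm_num1)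
    rw [hf _ (by norm_num1), log_nonpos_iff (hf' _ (by norm_num1)).le, h32,
        div_le_one (by positivity)]
    have e1 : (2 : ℝ) * 512 * 512 * (2 * 512) ^ (32 : ℝ) = 2 ^ (339 : ℝ) := by
      rw [show ((32 : ℝ)) = ((32 : ℕ) : ℝ) by norm_num, rpow_natCast,
        show ((339 : ℝ)) = ((339 : ℕ) : ℝ) by norm_num, rpow_natCast]
      norm_num [pow_succ]
    have e2 : (4 : ℝ) ^ ((512 : ℝ) / 3) = 2 ^ ((1024 : ℝ) / 3) := by
      rw [show (4 : ℝ) = 2 ^ (2 : ℝ) by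
        rw [show ((2 : ℝ)) = ((2 : ℕ) : ℝ) by norm_num, rpow_natCast]; norm_num]
      rw [← rpow_mul (by norm_num)]
      norm_num
    rw [e1, e2]
    apply rpow_le_rpow_of_exponent_le one_le_two
    norm_num

private theorem my_nat_ineq {n : ℕ} (n_large : 512 ≤ n) :
    2 * n * n * (2 * n) ^ Nat.sqrt (2 * n) * 4 ^ (2 * n / 3) ≤ 4 ^ n := by
  rw [← @Nat.cast_le ℝ]
  simp only [Nat.cast_mul, Nat.cast_pow, Nat.cast_ofNat, ← Real.rpow_natCast]
  refine le_trans ?_ (my_real_ineq (x := n) (by exact_mod_cast n_large))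
  have n2_pos : 0 < 2 * n := by omega
  gcongr
  · exact_mod_cast n2_pos
  · exact_mod_cast Real.nat_sqrt_le_real_sqrt
  · norm_num1
  · exact Nat.cast_div_le.trans (by norm_cast)

private theorem prod_small_bound (n : ℕ) (n_pos : 0 < n) :
    (∏ p ∈ Finset.range (2 * n / 3 + 1), p ^ (Nat.centralBinom n).factorization p)
      ≤ (2 * n) ^ Nat.sqrt (2 * n) * 4 ^ (2 * n / 3) := by
  have n2_pos : 1 ≤ 2 * n := by omega
  let S := (Finset.range (2 * n / 3 + 1)).filter Nat.Prime
  let f := fun (x : ℕ) => x ^ (Nat.centralBinom n).factorization x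
  have hSf : ∏ x ∈ S, f x = ∏ x ∈ Finset.range (2 * n / 3 + 1), f x := by
    refine Finset.prod_filter_of_ne fun p _ h => ?_
    contrapose! h; dsimp only [f]
    rw [Nat.factorization_eq_zero_of_not_prime n.centralBinom h, _root_.pow_zero]
  rw [show (∏ p ∈ Finset.range (2 * n / 3 + 1), p ^ (Nat.centralBinom n).factorization p)
      = ∏ x ∈ Finset.range (2 * n / 3 + 1), f x from rfl, ← hSf,
    ← Finset.prod_filter_mul_prod_filter_not S (· ≤ Nat.sqrt (2 * n))]
  apply Nat.mul_le_mul
  · refine (Finset.prod_le_prod' fun p _ => (?_ : f p ≤ 2 * n)).trans ?_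
    · exact Nat.pow_factorization_choose_le (by omega)
    have hcard : (Finset.Icc 1 (Nat.sqrt (2 * n))).card = Nat.sqrt (2 * n) := by
      rw [Nat.card_Icc, Nat.add_sub_cancel]
    rw [Finset.prod_const]
    refine pow_right_mono₀ n2_pos ((Finset.card_le_card fun x hx => ?_).trans hcard.le)
    obtain ⟨h1, h2⟩ := Finset.mem_filter.1 hx
    exact Finset.mem_Icc.mpr ⟨(Finset.mem_filter.1 h1).2.one_lt.le, h2⟩
  · refine le_trans ?_ (primorial_le_4_pow (2 * n / 3))
    refine (Finset.prod_le_prod' fun p hp => (?_ : f p ≤ p)).trans ?_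
    · obtain ⟨h1, h2⟩ := Finset.mem_filter.1 hp
      refine (pow_right_mono₀ (Finset.mem_filter.1 h1).2.one_lt.le ?_).trans (pow_one p).le
      exact Nat.factorization_choose_le_one (Nat.sqrt_lt'.mp <| not_le.1 h2)
    refine Finset.prod_le_prod_of_subset_of_one_le' (Finset.filter_subset _ _) ?_
    exact fun p hp _ => (Finset.mem_filter.1 hp).2.one_lt.le

private theorem strong_eventually (n : ℕ) (n_large : 512 ≤ n) :
    ∃ p, Nat.Prime p ∧ n < p ∧ p + 2 < 2 * n := by
  by_contra no_prime
  push_neg at no_prime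
  have n_pos : 0 < n := by omega
  have hsplit : Nat.centralBinom n =
      (∏ p ∈ Finset.range (2 * n / 3 + 1), p ^ (Nat.centralBinom n).factorization p)
        * ((2 * n - 1) ^ (Nat.centralBinom n).factorization (2 * n - 1)) := by
    conv_lhs => rw [← Nat.prod_pow_factorization_centralBinom n]
    have hnotmem : 2 * n - 1 ∉ Finset.range (2 * n / 3 + 1) := by
      simp only [Finset.mem_range]
      omega
    rw [← Finset.prod_singleton
      (f := fun x => x ^ (Nat.centralBinom n).factorization x) (a := 2 * n - 1),
      ← Finset.prod_union (Finset.disjoint_singleton_right.mpr hnotmem)]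
    symm
    apply Finset.prod_subset
    · intro x hx
      simp only [Finset.mem_union, Finset.mem_range, Finset.mem_singleton] at hx ⊢
      omega
    · intro x hx hxs
      simp only [Finset.mem_union, Finset.mem_range, Finset.mem_singleton] at hx hxs
      push_neg at hxs
      obtain ⟨hx1, hx2⟩ := hxs
      by_cases hp : x.Prime
      · rcases le_or_gt x n with hxn | hxn
        · rw [Nat.factorization_centralBinom_of_two_mul_self_lt_three_mul (by omega) hxn
            (by omega), pow_zero]
        · exfalso
          have h2 := no_prime x hp hxn
          have hxeven : Even x := by
            rcases (by omega : x = 2 * n - 2 ∨ x = 2 * n) with h | h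
            · exact ⟨n - 1, by omega⟩
            · exact ⟨n, by omega⟩
          have := hp.even_iff.mp hxeven
          omega
      · rw [Nat.factorization_eq_zero_of_not_prime _ hp, pow_zero]
  have key : Nat.centralBinom n ≤ ((2 * n) ^ Nat.sqrt (2 * n) * 4 ^ (2 * n / 3)) * (2 * n) := by
    rw [hsplit]
    exact Nat.mul_le_mul (prod_small_bound n n_pos)
      (Nat.pow_factorization_choose_le (by omega))
  have H2 : 4 ^ n < n * Nat.centralBinom n :=
    Nat.four_pow_lt_mul_centralBinom n (by omega)
  have H1 := my_nat_ineq n_large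
  have : n * Nat.centralBinom n ≤ 2 * n * n * (2 * n) ^ Nat.sqrt (2 * n) * 4 ^ (2 * n / 3) := by
    calc n * Nat.centralBinom n
        ≤ n * (((2 * n) ^ Nat.sqrt (2 * n) * 4 ^ (2 * n / 3)) * (2 * n)) :=
          Nat.mul_le_mul_left n key
      _ = 2 * n * n * (2 * n) ^ Nat.sqrt (2 * n) * 4 ^ (2 * n / 3) := by ring
  omega

private theorem strong_succ {n : ℕ} (q : ℕ) {p : ℕ} (hp : p.Prime) (cov : p + 2 < 2 * q)
    (H : n < q → ∃ r, Nat.Prime r ∧ n < r ∧ r + 2 < 2 * n) (hn : n < p) :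
    ∃ r, Nat.Prime r ∧ n < r ∧ r + 2 < 2 * n := by
  by_cases h : p + 2 < 2 * n
  · exact ⟨p, hp, hn, h⟩
  · exact H (by omega)

private theorem strong_bertrand (n : ℕ) (hn : 3 < n) :
    ∃ p, Nat.Prime p ∧ n < p ∧ p + 2 < 2 * n := by
  rcases le_or_gt 512 n with h | h
  · exact strong_eventually n h
  refine strong_succ 263 (p := 521) (by norm_num) (by norm_num) ?_ (by omega)
  intro h1
  refine strong_succ 137 (p := 263) (by norm_num) (by norm_num) ?_ h1
  intro h1
  refine strong_succ 71 (p := 137) (by norm_num) (by norm_num) ?_ h1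
  intro h1
  refine strong_succ 37 (p := 71) (by norm_num) (by norm_num) ?_ h1
  intro h1
  refine strong_succ 23 (p := 37) (by norm_num) (by norm_num) ?_ h1
  intro h1
  refine strong_succ 13 (p := 23) (by norm_num) (by norm_num) ?_ h1
  intro h1
  refine strong_succ 11 (p := 13) (by norm_num) (by norm_num) ?_ h1
  intro h1
  refine strong_succ 7 (p := 11) (by norm_num) (by norm_num) ?_ h1
  intro h1
  refine strong_succ 5 (p := 7) (by norm_num) (by norm_num) ?_ h1
  intro h1
  exact ⟨5, by norm_num, by omega, by omega⟩

theorem stmt_4 (n : ℕ) (hn : 3 < n) :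
    ∃ x : ℕ, 0 < x ∧ x < n - 2 ∧ Nat.totient (n + x) + 1 = n + x := by
  obtain ⟨p, hp, h1, h2⟩ := strong_bertrand n hn
  refine ⟨p - n, by omega, by omega, ?_⟩
  have hnp : n + (p - n) = p := by omega
  rw [hnp, Nat.totient_prime hp]
  have := hp.two_le
  omega
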